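/- Define, on infinite words over 2^AP, the satisfaction of flat formulas and the transition relation φ →^A φ' iff there exists φ'' ∈ U(φ) with φ' = φ''[A] ≠ false, where φ[A] removes the leading pseudo-atomic conjunct ψ if prop(ψ ∧ ψ') ⊆ A and returns false otherwise. Then for a flat formula φ and infinite word w: w ⊨ φ iff there exists φ' with φ →^{w(0)} φ' and w[1..] ⊨ φ'. -/
import Mathlib


/-- A flat LTL formula `ψ ∧ G ψ' ∧ ⋀ᵢ GF ψᵢ'' ∧ ⋀ⱼ F φⱼ`, where `ψ, ψ', ψᵢ''`
are pseudo-atomic (conjunctions of atoms, represented as finite sets) and each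
`φⱼ` is flat. -/
inductive Flat (AP : Type) : Type
  | mk : Finset AP → Finset AP → List (Finset AP) → List (Flat AP) → Flat AP

namespace Flat

variable {AP : Type} [DecidableEq AP]

/-- Conjunction of two flat formulas, merging the components. -/
def conj : Flat AP → Flat AP → Flat AP
  | mk ps g gf fs, mk ps' g' gf' fs' => mk (ps ∪ ps') (g ∪ g') (gf ++ gf') (fs ++ fs')

mutual
/-- Satisfaction of a flat formula by an infinite word at a position. -/
def Sat (w : ℕ → Finset AP) (n : ℕ) : Flat AP → Prop
  | mk ps g gf fs =>
      ps ⊆ w n ∧ (∀ m, n ≤ m → g ⊆ w m) ∧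
      (∀ c ∈ gf, ∀ m, n ≤ m → ∃ j, m ≤ j ∧ c ⊆ w j) ∧
      SatF w n fs

/-- `∀ φ ∈ fs, ∃ m ≥ n, Sat w m φ`. -/
def SatF (w : ℕ → Finset AP) (n : ℕ) : List (Flat AP) → Prop
  | [] => True
  | φ :: rest => (∃ m, n ≤ m ∧ Sat w m φ) ∧ SatF w n rest
end

mutual
/-- The unfolding `U(φ)`: for each `F φⱼ` conjunct, either keep it or replace it
by an element of `U(φⱼ)`. -/
def unfold : Flat AP → List (Flat AP)
  | mk ps g gf fs => (choices fs).map (conj (mk ps g gf []))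

/-- All combined choices for a list of `F`-subformulas. -/
def choices : List (Flat AP) → List (Flat AP)
  | [] => [mk ∅ ∅ [] []]
  | φ :: rest =>
      ((mk ∅ ∅ [] [φ]) :: unfold φ).flatMap (fun c => (choices rest).map (conj c))
end

/-- `φ[A]`: drop the leading pseudo-atomic conjunct if `prop(ψ ∧ ψ') ⊆ A`,
otherwise `false` (modelled as `none`). -/
def apply : Flat AP → Finset AP → Option (Flat AP)
  | mk ps g gf fs, A => if ps ∪ g ⊆ A then some (mk ∅ g gf fs) else none

/-- The transition relation `φ →^A φ'`. -/
def Trans (φ : Flat AP) (A : Finset AP) (φ' : Flat AP) : Prop :=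
  ∃ φ'' ∈ unfold φ, apply φ'' A = some φ'

-- auxiliary development

def Step (w : ℕ → Finset AP) (n : ℕ) : Flat AP → Prop
  | mk ps g gf fs => ps ∪ g ⊆ w n ∧ Sat w (n+1) (mk ∅ g gf fs)

theorem satF_append (w : ℕ → Finset AP) (n : ℕ) (l1 l2 : List (Flat AP)) :
    SatF w n (l1 ++ l2) ↔ SatF w n l1 ∧ SatF w n l2 := by
  induction l1 with
  | nil => simp [SatF]
  | cons a t ih => simp [SatF, ih, and_assoc]

theorem step_conj (w : ℕ → Finset AP) (n : ℕ) (a b : Flat AP) :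
    Step w n (conj a b) ↔ Step w n a ∧ Step w n b := by
  obtain ⟨ps, g, gf, fs⟩ := a
  obtain ⟨ps', g', gf', fs'⟩ := b
  simp only [conj, Step, Sat, satF_append, Finset.union_subset_iff, List.mem_append]
  constructor
  · rintro ⟨⟨⟨h1,h2⟩,h3,h4⟩, -, hg, hgf, hf1, hf2⟩
    refine ⟨⟨⟨h1,h3⟩, ?_, ?_, ?_, hf1⟩, ⟨⟨h2,h4⟩, ?_, ?_, ?_, hf2⟩⟩ <;>
      first
      | exact Finset.empty_subset _
      | (intro m hm; exact (hg m hm).1)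
      | (intro m hm; exact (hg m hm).2)
      | (intro c hc m hm; exact hgf c (Or.inl hc) m hm)
      | (intro c hc m hm; exact hgf c (Or.inr hc) m hm)
  · rintro ⟨⟨⟨h1,h3⟩, -, hg1, hgf1, hf1⟩, ⟨⟨h2,h4⟩, -, hg2, hgf2, hf2⟩⟩
    refine ⟨⟨⟨h1,h2⟩,h3,h4⟩, Finset.empty_subset _, ?_, ?_, hf1, hf2⟩
    · intro m hm; exact ⟨hg1 m hm, hg2 m hm⟩
    · rintro c (hc|hc) m hm
      · exact hgf1 c hc m hm
      · exact hgf2 c hc m hm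

theorem step_head (w : ℕ → Finset AP) (n : ℕ) (ps g : Finset AP) (gf : List (Finset AP)) :
    Step w n (mk ps g gf []) ↔
      ps ⊆ w n ∧ (∀ m, n ≤ m → g ⊆ w m) ∧
      (∀ c ∈ gf, ∀ m, n ≤ m → ∃ j, m ≤ j ∧ c ⊆ w j) := by
  simp only [Step, Sat, SatF, Finset.union_subset_iff, and_true]
  constructor
  · rintro ⟨⟨h1,h2⟩, -, hg, hgf⟩
    refine ⟨h1, ?_, ?_⟩
    · intro m hm
      rcases Nat.eq_or_lt_of_le hm with h | h
      · exact h ▸ h2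
      · exact hg m h
    · intro c hc m hm
      obtain ⟨j, hj1, hj2⟩ := hgf c hc (m+1) (by omega)
      exact ⟨j, by omega, hj2⟩
  · rintro ⟨h1, hg, hgf⟩
    exact ⟨⟨h1, hg n le_rfl⟩, Finset.empty_subset _,
      fun m hm => hg m (by omega), fun c hc m hm => hgf c hc m (by omega)⟩

theorem step_trivial (w : ℕ → Finset AP) (n : ℕ) : Step w n (mk (∅:Finset AP) ∅ [] []) := by
  simp [Step, Sat, SatF]

mutual
theorem lemA (w : ℕ → Finset AP) (n : ℕ) (φ : Flat AP) :
    Sat w n φ ↔ ∃ φ'' ∈ unfold φ, Step w n φ'' := by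
  obtain ⟨ps, g, gf, fs⟩ := φ
  rw [show Sat w n (mk ps g gf fs) ↔ _ from Iff.rfl]
  simp only [Sat, unfold, List.mem_map]
  constructor
  · rintro ⟨h1, h2, h3, h4⟩
    obtain ⟨c, hc, hstep⟩ := (lemB w n fs).mp h4
    exact ⟨conj (mk ps g gf []) c, ⟨c, hc, rfl⟩,
      (step_conj w n _ c).mpr ⟨(step_head w n ps g gf).mpr ⟨h1, h2, h3⟩, hstep⟩⟩
  · rintro ⟨φ'', ⟨c, hc, rfl⟩, hstep⟩
    obtain ⟨hh, hc'⟩ := (step_conj w n _ c).mp hstep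
    obtain ⟨h1, h2, h3⟩ := (step_head w n ps g gf).mp hh
    exact ⟨h1, h2, h3, (lemB w n fs).mpr ⟨c, hc, hc'⟩⟩
termination_by sizeOf φ

theorem lemB (w : ℕ → Finset AP) (n : ℕ) (fs : List (Flat AP)) :
    SatF w n fs ↔ ∃ c ∈ choices fs, Step w n c := by
  match fs with
  | [] =>
    simp only [SatF, choices, List.mem_singleton, true_iff]
    exact ⟨_, rfl, step_trivial w n⟩
  | φ :: rest =>
    simp only [SatF, choices, List.mem_flatMap, List.mem_map, List.mem_cons]
    constructor
    · rintro ⟨⟨m, hm, hsat⟩, hrest⟩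
      obtain ⟨b, hb, hbstep⟩ := (lemB w n rest).mp hrest
      rcases Nat.eq_or_lt_of_le hm with h | h
      · -- m = n : unfold φ now
        obtain ⟨a, ha, hastep⟩ := (lemA w n φ).mp (h ▸ hsat)
        exact ⟨conj a b, ⟨a, Or.inr ha, b, hb, rfl⟩,
          (step_conj w n a b).mpr ⟨hastep, hbstep⟩⟩
      · -- keep F φ
        refine ⟨conj (mk ∅ ∅ [] [φ]) b, ⟨_, Or.inl rfl, b, hb, rfl⟩,
          (step_conj w n _ b).mpr ⟨?_, hbstep⟩⟩
        refine ⟨by simp, Finset.empty_subset _, by simp, by simp, ⟨m, by omega, hsat⟩, trivial⟩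
    · rintro ⟨c, ⟨a, ha, b, hb, rfl⟩, hstep⟩
      obtain ⟨hastep, hbstep⟩ := (step_conj w n a b).mp hstep
      refine ⟨?_, (lemB w n rest).mpr ⟨b, hb, hbstep⟩⟩
      rcases ha with rfl | ha
      · obtain ⟨-, -, -, -, ⟨m, hm, hsat⟩, -⟩ := hastep
        exact ⟨m, by omega, hsat⟩
      · exact ⟨n, le_rfl, (lemA w n φ).mpr ⟨a, ha, hastep⟩⟩
termination_by sizeOf fs
end

mutual
theorem sat_shift (w : ℕ → Finset AP) (n : ℕ) (φ : Flat AP) :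
    Sat (fun k => w (k + 1)) n φ ↔ Sat w (n + 1) φ := by
  obtain ⟨ps, g, gf, fs⟩ := φ
  simp only [Sat]
  refine and_congr Iff.rfl (and_congr ?_ (and_congr ?_ (satF_shift w n fs)))
  · constructor
    · intro h m hm
      obtain ⟨k, rfl⟩ : ∃ k, m = k + 1 := ⟨m - 1, by omega⟩
      exact h k (by omega)
    · intro h m hm; exact h (m+1) (by omega)
  · constructor
    · intro h c hc m hm
      obtain ⟨j, hj1, hj2⟩ := h c hc m (by omega)
      exact ⟨j + 1, by omega, hj2⟩
    · intro h c hc m hm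
      obtain ⟨j, hj1, hj2⟩ := h c hc (m+1) (by omega)
      obtain ⟨k, rfl⟩ : ∃ k, j = k + 1 := ⟨j - 1, by omega⟩
      exact ⟨k, by omega, hj2⟩
termination_by sizeOf φ

theorem satF_shift (w : ℕ → Finset AP) (n : ℕ) (fs : List (Flat AP)) :
    SatF (fun k => w (k + 1)) n fs ↔ SatF w (n + 1) fs := by
  match fs with
  | [] => simp [SatF]
  | φ :: rest =>
    simp only [SatF]
    refine and_congr ?_ (satF_shift w n rest)
    constructor
    · rintro ⟨m, hm, hsat⟩
      exact ⟨m + 1, by omega, (sat_shift w m φ).mp hsat⟩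
    · rintro ⟨m, hm, hsat⟩
      obtain ⟨k, rfl⟩ : ∃ k, m = k + 1 := ⟨m - 1, by omega⟩
      exact ⟨k, by omega, (sat_shift w k φ).mpr hsat⟩
termination_by sizeOf fs
end

theorem step_iff_apply (w : ℕ → Finset AP) (n : ℕ) (φ'' : Flat AP) :
    Step w n φ'' ↔ ∃ φ', apply φ'' (w n) = some φ' ∧ Sat w (n+1) φ' := by
  obtain ⟨ps, g, gf, fs⟩ := φ''
  by_cases h : ps ∪ g ⊆ w n <;> simp [Step, apply, h]

end Flat

theorem stmt_19 {AP : Type} [DecidableEq AP] (w : ℕ → Finset AP) (φ : Flat AP) :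
    Flat.Sat w 0 φ ↔
      ∃ φ', Flat.Trans φ (w 0) φ' ∧ Flat.Sat (fun n => w (n + 1)) 0 φ' := by
  rw [Flat.lemA w 0 φ]
  constructor
  · rintro ⟨φ'', hmem, hstep⟩
    obtain ⟨φ', happ, hsat⟩ := (Flat.step_iff_apply w 0 φ'').mp hstep
    exact ⟨φ', ⟨φ'', hmem, happ⟩, (Flat.sat_shift w 0 φ').mpr hsat⟩
  · rintro ⟨φ', ⟨φ'', hmem, happ⟩, hsat⟩
    exact ⟨φ'', hmem, (Flat.step_iff_apply w 0 φ'').mpr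
      ⟨φ', happ, (Flat.sat_shift w 0 φ').mp hsat⟩⟩
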